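/- Suppose f : [a,b] × [c,d] → ℝ is convex on the co-ordinates (a < b, c < d) and integrable. Then f((a+b)/2, (c+d)/2) ≤ (1/((b-a)(d-c))) ∫_a^b ∫_c^d f(x,y) dy dx ≤ (f(a,c) + f(a,d) + f(b,c) + f(b,d))/4. -/

import Mathlib

open MeasureTheory

section HHaux
open Set

lemma chord {a b : ℝ} {g : ℝ → ℝ} (hab : a < b) (hg : ConvexOn ℝ (Set.Icc a b) g) :
    ∀ x ∈ Set.Icc a b, g x ≤ ((b - x) * g a + (x - a) * g b) / (b - a) := by
  intro x hx
  have hba : (0:ℝ) < b - a := by linarith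
  have key := hg.2 (Set.left_mem_Icc.2 hab.le) (Set.right_mem_Icc.2 hab.le)
    (div_nonneg (by linarith [hx.2] : (0:ℝ) ≤ b - x) hba.le)
    (div_nonneg (by linarith [hx.1] : (0:ℝ) ≤ x - a) hba.le)
    (by field_simp; ring)
  simp only [smul_eq_mul] at key
  have hxeq : (b - x) / (b - a) * a + (x - a) / (b - a) * b = x := by field_simp; ring
  rw [hxeq] at key
  calc g x ≤ (b - x) / (b - a) * g a + (x - a) / (b - a) * g b := key
    _ = ((b - x) * g a + (x - a) * g b) / (b - a) := by ring

lemma midrefl {a b : ℝ} {g : ℝ → ℝ} (hab : a < b) (hg : ConvexOn ℝ (Set.Icc a b) g) :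
    ∀ x ∈ Set.Icc a b, g ((a + b) / 2) ≤ (g x + g (a + b - x)) / 2 := by
  intro x hx
  have hx' : a + b - x ∈ Set.Icc a b := ⟨by linarith [hx.2], by linarith [hx.1]⟩
  have key := hg.2 hx hx' (by norm_num : (0:ℝ) ≤ 1/2) (by norm_num : (0:ℝ) ≤ 1/2) (by norm_num)
  simp only [smul_eq_mul] at key
  have : 1/2 * x + 1/2 * (a + b - x) = (a + b) / 2 := by ring
  rw [this] at key
  linarith

lemma convexOn_intervalIntegrable {a b : ℝ} {g : ℝ → ℝ} (hab : a < b)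
    (hg : ConvexOn ℝ (Set.Icc a b) g) : IntervalIntegrable g volume a b := by
  have hba : (0:ℝ) < b - a := by linarith
  have hub : ∀ x ∈ Set.Icc a b, g x ≤ |g a| + |g b| := by
    intro x hx
    have h1 := chord hab hg x hx
    have h2 : ((b - x) * g a + (x - a) * g b) / (b - a) ≤ |g a| + |g b| := by
      rw [div_le_iff₀ hba]
      nlinarith [le_abs_self (g a), le_abs_self (g b), abs_nonneg (g a), abs_nonneg (g b),
        hx.1, hx.2]
    linarith
  have hbound : ∀ x ∈ Set.Icc a b, |g x| ≤ |g a| + |g b| + |2 * g ((a + b) / 2)| := by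
    intro x hx
    have hx' : a + b - x ∈ Set.Icc a b := ⟨by linarith [hx.2], by linarith [hx.1]⟩
    have h1 := midrefl hab hg x hx
    have h2 := hub _ hx'
    have h3 := hub _ hx
    have h4 := neg_abs_le (2 * g ((a + b) / 2))
    have h5 := abs_nonneg (2 * g ((a + b) / 2))
    rw [abs_le]
    exact ⟨by linarith, by linarith⟩
  rw [intervalIntegrable_iff_integrableOn_Icc_of_le hab.le, integrableOn_Icc_iff_integrableOn_Ioo]
  have hcont : ContinuousOn g (Set.Ioo a b) := by
    have := hg.continuousOn_interior; rwa [interior_Icc] at this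
  refine ⟨hcont.aestronglyMeasurable measurableSet_Ioo,
    HasFiniteIntegral.restrict_of_bounded (C := |g a| + |g b| + |2 * g ((a + b) / 2)|) (by simp) ?_⟩
  filter_upwards [ae_restrict_mem measurableSet_Ioo] with x hx
  exact hbound x (Ioo_subset_Icc_self hx)

lemma HH {a b : ℝ} {g : ℝ → ℝ} (hab : a < b) (hg : ConvexOn ℝ (Set.Icc a b) g) :
    (b - a) * g ((a + b) / 2) ≤ (∫ x in a..b, g x) ∧
      (∫ x in a..b, g x) ≤ (b - a) * (g a + g b) / 2 := by
  have hba : (0:ℝ) < b - a := by linarith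
  have hgi := convexOn_intervalIntegrable hab hg
  have hrefl : IntervalIntegrable (fun x => g (a + b - x)) volume a b := by
    have h := hgi.comp_sub_left (a + b)
    simpa using h.symm
  have hreq : (∫ x in a..b, g (a + b - x)) = ∫ x in a..b, g x := by
    have := intervalIntegral.integral_comp_sub_left (a := a) (b := b) g (a + b)
    simpa using this
  constructor
  · have h1 : (∫ x in a..b, g ((a + b) / 2)) ≤ ∫ x in a..b, (g x + g (a + b - x)) / 2 :=
      intervalIntegral.integral_mono_on hab.le intervalIntegrable_const
        ((hgi.add hrefl).div_const 2) (midrefl hab hg)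
    rw [intervalIntegral.integral_const, smul_eq_mul] at h1
    have h2 : (∫ x in a..b, (g x + g (a + b - x)) / 2) = ∫ x in a..b, g x := by
      rw [intervalIntegral.integral_div, intervalIntegral.integral_add hgi hrefl, hreq]
      ring
    linarith
  · have h1 : (∫ x in a..b, g x) ≤ ∫ x in a..b, ((b - x) * g a + (x - a) * g b) / (b - a) :=
      intervalIntegral.integral_mono_on hab.le hgi
        (((Continuous.intervalIntegrable (by continuity) a b)).div_const (b - a))
        (chord hab hg)
    have h2 : (∫ x in a..b, ((b - x) * g a + (x - a) * g b) / (b - a))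
        = (b - a) * (g a + g b) / 2 := by
      rw [intervalIntegral.integral_div]
      have h3 : (∫ x in a..b, ((b - x) * g a + (x - a) * g b))
          = ∫ x in a..b, ((b * g a - a * g b) + (g b - g a) * x) :=
        intervalIntegral.integral_congr (fun x _ => by ring)
      have h4 : (∫ x in a..b, (g b - g a) * x) = (g b - g a) * ((b ^ 2 - a ^ 2) / 2) := by
        rw [intervalIntegral.integral_const_mul, integral_id]
      rw [h3, intervalIntegral.integral_add intervalIntegrable_const
        (Continuous.intervalIntegrable (by continuity) a b),
        intervalIntegral.integral_const, smul_eq_mul, h4]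
      field_simp
      ring
    linarith

end HHaux

/-- `f` is convex on the co-ordinates on `[a,b] × [c,d]`. -/
def CoordConvexOn (a b c d : ℝ) (f : ℝ → ℝ → ℝ) : Prop :=
  (∀ y ∈ Set.Icc c d, ConvexOn ℝ (Set.Icc a b) (fun x => f x y)) ∧
  (∀ x ∈ Set.Icc a b, ConvexOn ℝ (Set.Icc c d) (fun y => f x y))

theorem stmt4 (a b c d : ℝ) (hab : a < b) (hcd : c < d) (f : ℝ → ℝ → ℝ)
    (hf : CoordConvexOn a b c d f)
    (hint : IntegrableOn (fun p : ℝ × ℝ => f p.1 p.2) (Set.Icc a b ×ˢ Set.Icc c d)) :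
    f ((a + b) / 2) ((c + d) / 2) ≤
        (1 / ((b - a) * (d - c))) * ∫ x in a..b, ∫ y in c..d, f x y ∧
      (1 / ((b - a) * (d - c))) * ∫ x in a..b, ∫ y in c..d, f x y ≤
        (f a c + f a d + f b c + f b d) / 4 := by
  have hba : (0:ℝ) < b - a := by linarith
  have hdc : (0:ℝ) < d - c := by linarith
  have hP : (0:ℝ) < (b - a) * (d - c) := mul_pos hba hdc
  set g : ℝ → ℝ := fun x => ∫ y in c..d, f x y with hgdef
  have hslice : ∀ x ∈ Set.Icc a b, IntervalIntegrable (fun y => f x y) volume c d :=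
    fun x hx => convexOn_intervalIntegrable hcd (hf.2 x hx)
  have hgc : ConvexOn ℝ (Set.Icc a b) g := by
    refine ⟨convex_Icc a b, ?_⟩
    intro x hx y hy t s ht hs hts
    simp only [smul_eq_mul]
    have hz : t * x + s * y ∈ Set.Icc a b := by
      have := (convex_Icc a b) hx hy ht hs hts
      simpa using this
    have hpt : ∀ z ∈ Set.Icc c d, f (t * x + s * y) z ≤ t * f x z + s * f y z := by
      intro z hz'
      have := (hf.1 z hz').2 hx hy ht hs hts
      simpa using this
    have hI : (∫ z in c..d, f (t * x + s * y) z) ≤ ∫ z in c..d, (t * f x z + s * f y z) :=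
      intervalIntegral.integral_mono_on hcd.le (hslice _ hz)
        (((hslice x hx).const_mul t).add ((hslice y hy).const_mul s)) hpt
    have hJ : (∫ z in c..d, (t * f x z + s * f y z)) = t * g x + s * g y := by
      rw [intervalIntegral.integral_add ((hslice x hx).const_mul t)
        ((hslice y hy).const_mul s), intervalIntegral.integral_const_mul,
        intervalIntegral.integral_const_mul]
    calc g (t * x + s * y) ≤ ∫ z in c..d, (t * f x z + s * f y z) := hI
      _ = t * g x + s * g y := hJ
  have Hg := HH hab hgc
  have hmid : (a + b) / 2 ∈ Set.Icc a b := ⟨by linarith, by linarith⟩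
  have Hm := (HH hcd (hf.2 _ hmid)).1
  have Ha := (HH hcd (hf.2 a (Set.left_mem_Icc.2 hab.le))).2
  have Hb := (HH hcd (hf.2 b (Set.right_mem_Icc.2 hab.le))).2
  constructor
  · rw [one_div, ← div_eq_inv_mul, le_div_iff₀ hP]
    have h1 : (b - a) * ((d - c) * f ((a + b) / 2) ((c + d) / 2)) ≤ (b - a) * g ((a + b) / 2) :=
      mul_le_mul_of_nonneg_left Hm hba.le
    calc f ((a + b) / 2) ((c + d) / 2) * ((b - a) * (d - c))
        = (b - a) * ((d - c) * f ((a + b) / 2) ((c + d) / 2)) := by ring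
      _ ≤ (b - a) * g ((a + b) / 2) := h1
      _ ≤ ∫ x in a..b, g x := Hg.1
  · rw [one_div, ← div_eq_inv_mul, div_le_iff₀ hP]
    have h2 : g a + g b ≤ (d - c) * (f a c + f a d) / 2 + (d - c) * (f b c + f b d) / 2 := by
      linarith
    calc (∫ x in a..b, g x) ≤ (b - a) * (g a + g b) / 2 := Hg.2
      _ ≤ (b - a) * ((d - c) * (f a c + f a d) / 2 + (d - c) * (f b c + f b d) / 2) / 2 := by
          have := mul_le_mul_of_nonneg_left h2 hba.le
          linarith
      _ = (f a c + f a d + f b c + f b d) / 4 * ((b - a) * (d - c)) := by ring
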